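/- Let λ, μ be real constants with 1 + λ + μ ≠ 0, and let I ⊆ (0, ∞) be an open interval. Suppose y : I → ℝ is differentiable with y(k) > 0 and y'(k) > 0, and its marginal rate of substitution satisfies R(k) = (λ + μ)·k for all k ∈ I (the case θ = 1). Then there exists a constant A > 0 such that y(k) = A·k^{1/(1+λ+μ)} for all k ∈ I; that is, y is a Cobb–Douglas production function. -/
import Mathlib


open Real Set

/-- If the marginal rate of substitution is linear, `R(k) = (λ+μ)k` (the case `θ = 1`),
with `1 + λ + μ ≠ 0`, then `y(k) = A·k^{1/(1+λ+μ)}` for some `A > 0`: a Cobb–Douglas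
production function. -/
theorem stmt_13 (lam mu : ℝ) (h : 1 + lam + mu ≠ 0)
    (p q : ℝ) (hpq : 0 ≤ p) (y : ℝ → ℝ)
    (hdiff : ∀ k ∈ Ioo p q, DifferentiableAt ℝ y k)
    (hypos : ∀ k ∈ Ioo p q, 0 < y k)
    (hy' : ∀ k ∈ Ioo p q, 0 < deriv y k)
    (hR : ∀ k ∈ Ioo p q, y k / deriv y k - k = (lam + mu) * k) :
    ∃ A : ℝ, 0 < A ∧ ∀ k ∈ Ioo p q, y k = A * k ^ (1 / (1 + lam + mu)) := by
  by_cases hne : (Ioo p q).Nonempty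
  · obtain ⟨k₀, hk₀⟩ := hne
    set b := 1 + lam + mu with hb
    set c := 1 / b with hc
    have hkpos : ∀ k ∈ Ioo p q, (0:ℝ) < k := fun k hk => lt_of_le_of_lt hpq hk.1
    have hyy : ∀ k ∈ Ioo p q, y k = deriv y k * (b * k) := by
      intro k hk
      have h1 := hR k hk
      have h2 : y k / deriv y k = b * k := by
        rw [hb]; ring_nf; ring_nf at h1; linarith
      rw [div_eq_iff (hy' k hk).ne'] at h2
      linarith
    have hbpos : 0 < b := by
      have h2 := hyy k₀ hk₀
      have hyk := hypos k₀ hk₀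
      have hy'k := hy' k₀ hk₀
      have hk0 := hkpos k₀ hk₀
      nlinarith [mul_pos (hy' k₀ hk₀) (hkpos k₀ hk₀)]
    have hbc : b * c = 1 := by rw [hc]; field_simp
    -- g k = y k * k ^ (-c) has derivative 0 on Ioo p q
    set g : ℝ → ℝ := fun k => y k * k ^ (-c) with hg
    have hgd : ∀ k ∈ Ioo p q, HasDerivAt g 0 k := by
      intro k hk
      have hk0 : (0:ℝ) < k := hkpos k hk
      have h1 : HasDerivAt y (deriv y k) k := (hdiff k hk).hasDerivAt
      have h2 : HasDerivAt (fun x : ℝ => x ^ (-c)) (-c * k ^ (-c - 1)) k :=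
        Real.hasDerivAt_rpow_const (Or.inl hk0.ne')
      have h3 := h1.mul h2
      have hkk : k * k ^ (-c - 1) = k ^ (-c) := by
        nth_rewrite 1 [← Real.rpow_one k]
        rw [← Real.rpow_add hk0]; norm_num
      have h4 : b * k * (-c * k ^ (-c - 1)) = -(k ^ (-c)) := by
        calc b * k * (-c * k ^ (-c - 1)) = -(b * c) * (k * k ^ (-c - 1)) := by ring
          _ = -(1) * (k ^ (-c)) := by rw [hbc, hkk]
          _ = -(k ^ (-c)) := by ring
      have key : deriv y k * k ^ (-c) + y k * (-c * k ^ (-c - 1)) = 0 := by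
        rw [hyy k hk, mul_assoc, h4]; ring
      exact key ▸ h3
    have hconv : Convex ℝ (Ioo p q) := convex_Ioo p q
    have hgdiff : DifferentiableOn ℝ g (Ioo p q) := fun k hk =>
      ((hgd k hk).differentiableAt).differentiableWithinAt
    have hfz : ∀ k ∈ Ioo p q, fderivWithin ℝ g (Ioo p q) k = 0 := by
      intro k hk
      rw [fderivWithin_of_isOpen isOpen_Ioo hk, (hgd k hk).hasFDerivAt.fderiv]
      ext
      simp
    have hconst : ∀ k ∈ Ioo p q, g k = g k₀ := fun k hk =>
      hconv.is_const_of_fderivWithin_eq_zero hgdiff hfz hk hk₀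
    refine ⟨g k₀, ?_, ?_⟩
    · exact mul_pos (hypos k₀ hk₀) (Real.rpow_pos_of_pos (hkpos k₀ hk₀) _)
    · intro k hk
      have hk0 : (0:ℝ) < k := hkpos k hk
      have h1 := hconst k hk
      have hkc : k ^ (-c) * k ^ c = 1 := by
        rw [← Real.rpow_add hk0]; norm_num
      calc y k = y k * (k ^ (-c) * k ^ c) := by rw [hkc, mul_one]
        _ = g k * k ^ c := by rw [hg]; ring
        _ = g k₀ * k ^ (1 / (1 + lam + mu)) := by rw [h1, hc, hb]
  · exact ⟨1, one_pos, fun k hk => absurd ⟨k, hk⟩ hne⟩
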